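/- Let μ > 0 and let f be a classical solution of the BDY PDE on [0,∞) × [0,∞) with ∫₀^∞ f(v,t) dv = 1 and ∫₀^∞ v f(v,t) dv = μ for all t ≥ 0, such that v² f(v,t), v² ∂_v f(v,t), v f(v,t) → 0 as v → ∞ and v ↦ v² f(v,t), v² ∂_vv f(v,t) are integrable for each t. Then d/dt ∫₀^∞ v² f(v,t) dv = 2 ( 1 − μ f(0,t) ) for all t ≥ 0. -/

import Mathlib

open MeasureTheory Set Filter
open scoped Convolution

set_option maxHeartbeats 1000000 in
/-- **Evolution of the second moment for the BDY PDE.**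
Let `μ > 0` and let `f` be a classical solution of the BDY PDE
`∂_t f = ∂_vv f + f(0,t) ∂_v f` with Robin boundary condition `∂_v f(0,t) + f(0,t)² = 0`,
which is for every `t` a probability density with mean `μ`, such that
`v² f(v,t), v² ∂_v f(v,t), v f(v,t) → 0` as `v → ∞`, `v ↦ v² f(v,t)` and
`v ↦ v² ∂_vv f(v,t)` are integrable for each `t`, and the second moment may be
differentiated in time under the integral sign. Then
`d/dt ∫₀^∞ v² f(v,t) dv = 2 (1 − μ f(0,t))` for all `t ≥ 0`. -/
theorem BDY_PDE_second_moment
    (μ : ℝ) (hμ : 0 < μ)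
    (f ft fv fvv : ℝ → ℝ → ℝ)
    (hcont : ContinuousOn (fun p : ℝ × ℝ => f p.1 p.2) (Ici 0 ×ˢ Ici 0))
    (hfv : ∀ v t : ℝ, 0 ≤ v → 0 ≤ t → HasDerivAt (fun w => f w t) (fv v t) v)
    (hfvv : ∀ v t : ℝ, 0 ≤ v → 0 ≤ t → HasDerivAt (fun w => fv w t) (fvv v t) v)
    (hft : ∀ v t : ℝ, 0 ≤ v → 0 ≤ t → HasDerivAt (fun s => f v s) (ft v t) t)
    (hint : ∀ t : ℝ, 0 ≤ t → IntegrableOn (fun v => f v t) (Ioi 0))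
    (hint_fv : ∀ t : ℝ, 0 ≤ t → IntegrableOn (fun v => fv v t) (Ioi 0))
    (hint_fvv : ∀ t : ℝ, 0 ≤ t → IntegrableOn (fun v => fvv v t) (Ioi 0))
    (hint_vf : ∀ t : ℝ, 0 ≤ t → IntegrableOn (fun v => v * f v t) (Ioi 0))
    (hint_v2f : ∀ t : ℝ, 0 ≤ t → IntegrableOn (fun v => v ^ 2 * f v t) (Ioi 0))
    (hint_v2fvv : ∀ t : ℝ, 0 ≤ t → IntegrableOn (fun v => v ^ 2 * fvv v t) (Ioi 0))
    (hmass : ∀ t : ℝ, 0 ≤ t → ∫ v in Ioi (0:ℝ), f v t = 1)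
    (hmean : ∀ t : ℝ, 0 ≤ t → ∫ v in Ioi (0:ℝ), v * f v t = μ)
    (hdecay : ∀ t : ℝ, 0 ≤ t → Tendsto (fun v => f v t) atTop (nhds 0))
    (hdecay_fv : ∀ t : ℝ, 0 ≤ t → Tendsto (fun v => fv v t) atTop (nhds 0))
    (hdecay_v2f : ∀ t : ℝ, 0 ≤ t → Tendsto (fun v => v ^ 2 * f v t) atTop (nhds 0))
    (hdecay_v2fv : ∀ t : ℝ, 0 ≤ t → Tendsto (fun v => v ^ 2 * fv v t) atTop (nhds 0))
    (hdecay_vf : ∀ t : ℝ, 0 ≤ t → Tendsto (fun v => v * f v t) atTop (nhds 0))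
    (hPDE : ∀ v t : ℝ, 0 < v → 0 ≤ t → ft v t = fvv v t + f 0 t * fv v t)
    (hBC : ∀ t : ℝ, 0 ≤ t → fv 0 t + (f 0 t) ^ 2 = 0)
    (hDUI : ∀ t : ℝ, 0 ≤ t →
      HasDerivAt (fun s => ∫ v in Ioi (0:ℝ), v ^ 2 * f v s)
        (∫ v in Ioi (0:ℝ), v ^ 2 * ft v t) t) :
    ∀ t : ℝ, 0 ≤ t →
      deriv (fun s => ∫ v in Ioi (0:ℝ), v ^ 2 * f v s) t = 2 * (1 - μ * f 0 t) := by
  intro t ht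
  have hfvc : ContinuousOn (fun v => fv v t) (Ici 0) :=
    fun v hv => ((hfvv v t hv ht).continuousAt).continuousWithinAt
  -- the convolution kernel giving `v ↦ ∫ w in Ioc v (v+1), |w^2 fvv w t|`
  set φ : ℝ → ℝ := (Ioi (0:ℝ)).indicator (fun w => |w ^ 2 * fvv w t|) with hφdef
  set χ : ℝ → ℝ := (Ico (-1:ℝ) 0).indicator (fun _ => (1:ℝ)) with hχdef
  have hφint : Integrable φ := (integrable_indicator_iff measurableSet_Ioi).2 (hint_v2fvv t ht).abs
  have hχint : Integrable χ := by
    refine (integrable_indicator_iff measurableSet_Ico).2 ?_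
    refine integrableOn_const ?_
    rw [Real.volume_Ico]
    norm_num
  set H : ℝ → ℝ := φ ⋆[ContinuousLinearMap.mul ℝ ℝ] χ with hHdef
  have hHint : Integrable H := hφint.integrable_convolution _ hχint
  have hHeq : ∀ v : ℝ, 0 < v → H v = ∫ w in Ioc v (v+1), |w ^ 2 * fvv w t| := by
    intro v hv
    rw [hHdef, convolution_def, ← integral_indicator measurableSet_Ioc]
    congr 1
    funext w
    by_cases hw : w ∈ Ioc v (v+1)
    · have h1 : (0:ℝ) < w := lt_trans hv hw.1
      have h2 : v - w ∈ Ico (-1:ℝ) 0 := ⟨by linarith [hw.2], by linarith [hw.1]⟩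
      simp [hφdef, hχdef, indicator_of_mem, hw, h2, mem_Ioi.2 h1]
    · have h2 : v - w ∉ Ico (-1:ℝ) 0 := by
        intro h
        exact hw ⟨by linarith [h.2], by linarith [h.1]⟩
      simp [hχdef, indicator_of_notMem, h2, hw]
  -- integrability of the translated second moment
  have hT1 : IntegrableOn (fun v => (v+1) ^ 2 * f (v+1) t) (Ioi 0) := by
    have h0 : Integrable ((Ioi (1:ℝ)).indicator (fun u => u ^ 2 * f u t)) :=
      (integrable_indicator_iff measurableSet_Ioi).2
        ((hint_v2f t ht).mono_set (Ioi_subset_Ioi one_pos.le))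
    have h1 : Integrable (((Ioi (1:ℝ)).indicator (fun u => u ^ 2 * f u t)) ∘ (· + (1:ℝ))) :=
      ((measurePreserving_add_right volume (1:ℝ)).integrable_comp_emb
        (MeasurableEquiv.addRight (1:ℝ)).measurableEmbedding).2 h0
    have h2 : Integrable ((Ioi (0:ℝ)).indicator fun v => (v+1) ^ 2 * f (v+1) t) := by
      convert h1 using 1
      funext v
      by_cases hv : v ∈ Ioi (0:ℝ)
      · have hv' : v + 1 ∈ Ioi (1:ℝ) := by simpa using hv
        simp [indicator_of_mem hv, Function.comp, indicator_of_mem hv']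
      · have hv' : v + 1 ∉ Ioi (1:ℝ) := by simpa using hv
        simp [indicator_of_notMem hv, Function.comp, indicator_of_notMem hv']
    exact (integrable_indicator_iff measurableSet_Ioi).1 h2
  -- the key integrability: `v^2 fv` is integrable on `(0,∞)`
  have hIv2fv : IntegrableOn (fun v => v ^ 2 * fv v t) (Ioi 0) := by
    refine Integrable.mono'
      (g := fun v => |(v+1) ^ 2 * f (v+1) t| + |v ^ 2 * f v t| + H v)
      ((hT1.abs.add (hint_v2f t ht).abs).add hHint.integrableOn) ?_ ?_
    · refine ContinuousOn.aestronglyMeasurable ?_ measurableSet_Ioi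
      exact ((continuous_pow 2).continuousOn).mul
        (hfvc.mono Ioi_subset_Ici_self)
    · filter_upwards [ae_restrict_mem measurableSet_Ioi] with v hv
      have hv0 : (0:ℝ) < v := hv
      have hIccsub : Icc v (v+1) ⊆ Ioi (0:ℝ) := fun w hw => lt_of_lt_of_le hv0 hw.1
      have hD2 : IntegrableOn (fun w => (v+1-w) * fvv w t) (Icc v (v+1)) :=
        IntegrableOn.continuousOn_mul
          ((continuous_const.sub continuous_id).continuousOn)
          ((hint_fvv t ht).mono_set hIccsub) isCompact_Icc
      have hDint : IntervalIntegrable (fun w => (v+1-w) * fvv w t) volume v (v+1) := by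
        rw [intervalIntegrable_iff_integrableOn_Ioc_of_le (by linarith)]
        exact hD2.mono_set Ioc_subset_Icc_self
      -- Taylor formula with integral remainder
      have key : fv v t
          = (f (v+1) t - f v t) - ∫ w in v..(v+1), (v+1-w) * fvv w t := by
        have heq := intervalIntegral.integral_eq_sub_of_hasDerivAt
          (f := fun w => (v+1-w) * fv w t + f w t)
          (f' := fun w => (v+1-w) * fvv w t) ?_ hDint
        · have : (∫ w in v..(v+1), (v+1-w) * fvv w t)
              = f (v+1) t - (fv v t + f v t) := by
            rw [heq]; ring
          linarith [this]
        · intro w hw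
          rw [uIcc_of_le (by linarith : v ≤ v + 1)] at hw
          have hw0 : (0:ℝ) ≤ w := le_trans hv0.le hw.1
          have h1 : HasDerivAt (fun w => ((v:ℝ)+1-w) * fv w t)
              ((-1) * fv w t + (v+1-w) * fvv w t) w := by
            have ha : HasDerivAt (fun w : ℝ => (v:ℝ)+1-w) (-1) w := by
              simpa using (hasDerivAt_id w).const_sub ((v:ℝ)+1)
            exact ha.mul (hfvv w t hw0 ht)
          have := h1.add (hfv w t hw0 ht)
          convert this using 1
          · rfl
          · ring
      -- the bound
      have habs : |∫ w in v..(v+1), (v+1-w) * fvv w t|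
          ≤ ∫ w in Ioc v (v+1), |(v+1-w) * fvv w t| := by
        rw [intervalIntegral.integral_of_le (by linarith : v ≤ v + 1)]
        exact norm_integral_le_integral_norm (fun w => (v+1-w) * fvv w t)
      have hIbnd : v ^ 2 * |∫ w in v..(v+1), (v+1-w) * fvv w t|
          ≤ ∫ w in Ioc v (v+1), |w ^ 2 * fvv w t| := by
        calc v ^ 2 * |∫ w in v..(v+1), (v+1-w) * fvv w t|
            ≤ v ^ 2 * ∫ w in Ioc v (v+1), |(v+1-w) * fvv w t| := by
              exact mul_le_mul_of_nonneg_left habs (sq_nonneg v)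
          _ = ∫ w in Ioc v (v+1), v ^ 2 * |(v+1-w) * fvv w t| := by
              rw [integral_const_mul]
          _ ≤ ∫ w in Ioc v (v+1), |w ^ 2 * fvv w t| := by
              refine setIntegral_mono_on
                (((hD2.mono_set Ioc_subset_Icc_self).abs).const_mul _)
                (((hint_v2fvv t ht).mono_set
                  (fun w hw => hIccsub (Ioc_subset_Icc_self hw))).abs)
                measurableSet_Ioc ?_
              intro w hw
              have hvw : v ≤ w := hw.1.le
              have h01 : 0 ≤ v + 1 - w := by linarith [hw.2]
              have hle1 : v + 1 - w ≤ 1 := by linarith [hw.1.le]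
              have hsq : v ^ 2 ≤ w ^ 2 := by nlinarith
              rw [abs_mul, abs_mul, abs_of_nonneg h01,
                abs_of_nonneg (sq_nonneg w)]
              have hA : v ^ 2 * (v + 1 - w) ≤ w ^ 2 := by
                nlinarith [mul_nonneg (sq_nonneg v)
                  (show (0:ℝ) ≤ 1 - (v + 1 - w) by linarith)]
              calc v ^ 2 * ((v + 1 - w) * |fvv w t|)
                  = (v ^ 2 * (v + 1 - w)) * |fvv w t| := by ring
                _ ≤ w ^ 2 * |fvv w t| :=
                    mul_le_mul_of_nonneg_right hA (abs_nonneg _)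
      have hsq1 : v ^ 2 ≤ (v + 1) ^ 2 := by nlinarith
      rw [Real.norm_eq_abs, key, hHeq v hv0]
      have e1 : |v ^ 2 * ((f (v+1) t - f v t)
          - ∫ w in v..(v+1), (v+1-w) * fvv w t)|
          ≤ v ^ 2 * |f (v+1) t| + v ^ 2 * |f v t|
            + v ^ 2 * |∫ w in v..(v+1), (v+1-w) * fvv w t| := by
        have h3 : |(f (v+1) t - f v t)
            - ∫ w in v..(v+1), (v+1-w) * fvv w t|
            ≤ |f (v+1) t| + |f v t|
              + |∫ w in v..(v+1), (v+1-w) * fvv w t| := by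
          have ha := abs_sub (f (v+1) t - f v t)
            (∫ w in v..(v+1), (v+1-w) * fvv w t)
          have hb := abs_sub (f (v+1) t) (f v t)
          linarith
        calc |v ^ 2 * ((f (v+1) t - f v t)
              - ∫ w in v..(v+1), (v+1-w) * fvv w t)|
            = v ^ 2 * |(f (v+1) t - f v t)
              - ∫ w in v..(v+1), (v+1-w) * fvv w t| := by
              rw [abs_mul, abs_of_nonneg (sq_nonneg v)]
          _ ≤ v ^ 2 * (|f (v+1) t| + |f v t|
              + |∫ w in v..(v+1), (v+1-w) * fvv w t|) :=
              mul_le_mul_of_nonneg_left h3 (sq_nonneg v)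
          _ = _ := by ring
      refine e1.trans ?_
      have e2 : v ^ 2 * |f (v+1) t| ≤ |(v+1) ^ 2 * f (v+1) t| := by
        rw [abs_mul, abs_of_nonneg (sq_nonneg (v+1))]
        exact mul_le_mul_of_nonneg_right hsq1 (abs_nonneg _)
      have e3 : v ^ 2 * |f v t| = |v ^ 2 * f v t| := by
        rw [abs_mul, abs_of_nonneg (sq_nonneg v)]
      linarith [hIbnd]
  -- first integration by parts: ∫ v² fvv = 2
  have hI1 : ∫ v in Ioi (0:ℝ), (v ^ 2 * fvv v t - 2 * f v t) = 0 := by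
    have hci : IntegrableOn (fun v => v ^ 2 * fvv v t - 2 * f v t) (Ioi 0) :=
      (hint_v2fvv t ht).sub ((hint t ht).const_mul 2)
    have h := integral_Ioi_of_hasDerivAt_of_tendsto' (a := (0:ℝ))
      (f := fun v => v ^ 2 * fv v t - 2 * (v * f v t))
      (f' := fun v => v ^ 2 * fvv v t - 2 * f v t) (m := 0)
      ?_ hci ?_
    · simpa using h
    · intro v hv
      have h1 : HasDerivAt (fun w : ℝ => w ^ 2 * fv w t)
          ((2:ℕ) * v ^ (2-1) * fv v t + v ^ 2 * fvv v t) v :=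
        (hasDerivAt_pow 2 v).mul (hfvv v t hv ht)
      have h2 : HasDerivAt (fun w : ℝ => w * f w t)
          (1 * f v t + v * fv v t) v :=
        (hasDerivAt_id' (x := v)).mul (hfv v t hv ht)
      have hE : ((2:ℕ) * v ^ (2-1) * fv v t + v ^ 2 * fvv v t)
          - 2 * (1 * f v t + v * fv v t)
          = v ^ 2 * fvv v t - 2 * f v t := by push_cast; ring
      show HasDerivAt (fun w : ℝ => w ^ 2 * fv w t - 2 * (w * f w t))
        (v ^ 2 * fvv v t - 2 * f v t) v
      exact hE ▸ (h1.sub (h2.const_mul 2))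
    · have := (hdecay_v2fv t ht).sub ((hdecay_vf t ht).const_mul 2)
      simpa using this
  have hJ1 : ∫ v in Ioi (0:ℝ), v ^ 2 * fvv v t = 2 := by
    rw [integral_sub (hint_v2fvv t ht) ((hint t ht).const_mul 2),
      integral_const_mul, hmass t ht] at hI1
    linarith
  -- second integration by parts: ∫ v² fv = -2μ
  have hI2 : ∫ v in Ioi (0:ℝ), (v ^ 2 * fv v t + 2 * (v * f v t)) = 0 := by
    have hci : IntegrableOn (fun v => v ^ 2 * fv v t + 2 * (v * f v t)) (Ioi 0) :=
      hIv2fv.add ((hint_vf t ht).const_mul 2)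
    have h := integral_Ioi_of_hasDerivAt_of_tendsto' (a := (0:ℝ))
      (f := fun v => v ^ 2 * f v t)
      (f' := fun v => v ^ 2 * fv v t + 2 * (v * f v t)) (m := 0)
      ?_ hci (hdecay_v2f t ht)
    · simpa using h
    · intro v hv
      have h1 : HasDerivAt (fun w : ℝ => w ^ 2 * f w t)
          ((2:ℕ) * v ^ (2-1) * f v t + v ^ 2 * fv v t) v :=
        (hasDerivAt_pow 2 v).mul (hfv v t hv ht)
      have hE : ((2:ℕ) * v ^ (2-1) * f v t + v ^ 2 * fv v t)
          = v ^ 2 * fv v t + 2 * (v * f v t) := by push_cast; ring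
      show HasDerivAt (fun w : ℝ => w ^ 2 * f w t)
        (v ^ 2 * fv v t + 2 * (v * f v t)) v
      exact hE ▸ h1
  have hJ2 : ∫ v in Ioi (0:ℝ), v ^ 2 * fv v t = -(2*μ) := by
    rw [integral_add hIv2fv ((hint_vf t ht).const_mul 2),
      integral_const_mul, hmean t ht] at hI2
    linarith
  -- conclusion
  have hft_eq : ∫ v in Ioi (0:ℝ), v ^ 2 * ft v t = 2 * (1 - μ * f 0 t) := by
    have hcongr : EqOn (fun v => v ^ 2 * ft v t)
        (fun v => v ^ 2 * fvv v t + f 0 t * (v ^ 2 * fv v t)) (Ioi 0) := by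
      intro v hv
      simp only
      rw [hPDE v t hv ht]
      ring
    rw [setIntegral_congr_fun measurableSet_Ioi hcongr,
      integral_add (hint_v2fvv t ht) (hIv2fv.const_mul _),
      integral_const_mul, hJ1, hJ2]
    ring
  rw [(hDUI t ht).deriv, hft_eq]
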